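/- Let G be a split graph with maximum clique K and independent set I, and let P = (w_1,...,w_i; x_1,...,x_{i-1}) and Q = (s_1,...,s_j; t_1,...,t_{j-1}) with i, j ≥ 3 be two vertex-disjoint alternating paths (w's, s's in K; x's, t's in I) in G − N^I(v), where v ∈ K has N^I(v) of size 3 and G is K_{1,4}-free. Then there exists a single vertex v_1 ∈ N^I(v) adjacent to all internal clique vertices w_2,...,w_{i-1} and s_2,...,s_{j-1} of both paths. -/
import Mathlib


open SimpleGraph

variable {V : Type*}

/-- `I` is an independent set in `G`. -/
def IndepOn (G : SimpleGraph V) (I : Set V) : Prop :=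
  ∀ ⦃u⦄, u ∈ I → ∀ ⦃v⦄, v ∈ I → ¬ G.Adj u v

/-- `(K, I)` is a split partition of `G`: `K` a clique, `I` independent,
partitioning the vertex set. -/
def SplitPartition (G : SimpleGraph V) (K I : Set V) : Prop :=
  Disjoint K I ∧ K ∪ I = Set.univ ∧ G.IsClique K ∧ IndepOn G I

/-- `K` is a maximum clique of `G`. -/
def MaxClique (G : SimpleGraph V) (K : Set V) : Prop :=
  G.IsClique K ∧ ∀ K' : Set V, G.IsClique K' → K'.ncard ≤ K.ncard

/-- `G` has no induced copy of the star `K_{1,n}` (center plus `n` pairwise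
nonadjacent leaves). -/
def StarFree (G : SimpleGraph V) (n : ℕ) : Prop :=
  ¬ ∃ (c : V) (L : Finset V), L.card = n ∧ c ∉ L ∧ (∀ l ∈ L, G.Adj c l) ∧
      (∀ l ∈ L, ∀ m ∈ L, l ≠ m → ¬ G.Adj l m)

/-- `(w, x)` describes an alternating path `w 0, x 0, w 1, x 1, …, w (j-1)`
in `G - A` with the `j` vertices `w i` in `K` and the `j - 1` vertices `x i`
in `I`, all distinct and avoiding `A`. -/
def IsAltPath (G : SimpleGraph V) (K I A : Set V) (j : ℕ) (w x : ℕ → V) : Prop :=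
  2 ≤ j ∧
  (∀ i < j, w i ∈ K ∧ w i ∉ A) ∧
  (∀ i < j - 1, x i ∈ I ∧ x i ∉ A) ∧
  (∀ i < j, ∀ k < j, w i = w k → i = k) ∧
  (∀ i < j - 1, ∀ k < j - 1, x i = x k → i = k) ∧
  (∀ i < j, ∀ k < j - 1, w i ≠ x k) ∧
  (∀ i < j - 1, G.Adj (w i) (x i) ∧ G.Adj (w (i + 1)) (x i))

/-- The vertex set of the alternating path `(w, x)` with `j` clique vertices. -/
def altPathVerts (j : ℕ) (w x : ℕ → V) : Set V :=
  {u | ∃ i < j, u = w i} ∪ {u | ∃ i < j - 1, u = x i}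


private lemma star4_aux (G : SimpleGraph V) (hfree : StarFree G 4) {c a b d e : V}
    (hab : a ≠ b) (had : a ≠ d) (hae : a ≠ e) (hbd : b ≠ d) (hbe : b ≠ e) (hde : d ≠ e)
    (hca : c ≠ a) (hcb : c ≠ b) (hcd : c ≠ d) (hce : c ≠ e)
    (h1 : G.Adj c a) (h2 : G.Adj c b) (h3 : G.Adj c d) (h4 : G.Adj c e)
    (n1 : ¬ G.Adj a b) (n2 : ¬ G.Adj a d) (n3 : ¬ G.Adj a e)
    (n4 : ¬ G.Adj b d) (n5 : ¬ G.Adj b e) (n6 : ¬ G.Adj d e) : False := by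
  classical
  apply hfree
  refine ⟨c, {a, b, d, e}, ?_, ?_, ?_, ?_⟩
  · rw [Finset.card_insert_of_notMem (by simp [hab, had, hae]),
      Finset.card_insert_of_notMem (by simp [hbd, hbe]),
      Finset.card_insert_of_notMem (by simp [hde]), Finset.card_singleton]
  · simp [Finset.mem_insert, hca, hcb, hcd, hce]
  · intro l hl
    simp only [Finset.mem_insert, Finset.mem_singleton] at hl
    rcases hl with rfl | rfl | rfl | rfl <;> assumption
  · intro l hl m hm hne
    simp only [Finset.mem_insert, Finset.mem_singleton] at hl hm
    rcases hl with rfl | rfl | rfl | rfl <;> rcases hm with rfl | rfl | rfl | rfl <;>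
      first
        | exact absurd rfl hne
        | assumption
        | exact fun h => n1 h.symm
        | exact fun h => n2 h.symm
        | exact fun h => n3 h.symm
        | exact fun h => n4 h.symm
        | exact fun h => n5 h.symm
        | exact fun h => n6 h.symm

/-- For two vertex-disjoint alternating paths in `G - N^I(v)`, each with at
least 3 clique vertices, a single `v₁ ∈ N^I(v)` is adjacent to all internal
clique vertices of both paths. -/
theorem universal_vertex_for_two_paths [Fintype V] (G : SimpleGraph V)
    (K I : Set V) (hsplit : SplitPartition G K I) (hmax : MaxClique G K)
    (hfree : StarFree G 4) (v : V) (hv : v ∈ K)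
    (hdeg : (G.neighborSet v ∩ I).ncard = 3)
    (i j : ℕ) (hi : 3 ≤ i) (hj : 3 ≤ j) (w x s t : ℕ → V)
    (hP : IsAltPath G K I (G.neighborSet v ∩ I) i w x)
    (hQ : IsAltPath G K I (G.neighborSet v ∩ I) j s t)
    (hdisj : Disjoint (altPathVerts i w x) (altPathVerts j s t)) :
    ∃ v₁ ∈ G.neighborSet v ∩ I,
      (∀ k, 1 ≤ k → k < i - 1 → G.Adj v₁ (w k)) ∧
      (∀ k, 1 ≤ k → k < j - 1 → G.Adj v₁ (s k)) := by
  classical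
  obtain ⟨hKI, hUniv, hK, hI⟩ := hsplit
  set A : Set V := G.neighborSet v ∩ I with hA
  have hAI : ∀ z ∈ A, z ∈ I := fun z hz => hz.2
  have hAadj : ∀ z ∈ A, G.Adj v z := fun z hz => hz.1
  obtain ⟨a₁, a₂, a₃, h12, h13, h23, hAeq⟩ := Set.ncard_eq_three.mp hdeg
  have ha₁ : a₁ ∈ A := by rw [hAeq]; simp
  have ha₂ : a₂ ∈ A := by rw [hAeq]; simp
  have ha₃ : a₃ ∈ A := by rw [hAeq]; simp
  have hKnI : ∀ u ∈ K, u ∉ I := fun u hu => Set.disjoint_left.mp hKI hu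
  -- every vertex of K with two distinct I-neighbors outside A has exactly one
  -- neighbor in A, and its I-neighborhood is contained in {p, q, z}
  have color : ∀ u p q, u ∈ K → p ∈ I → q ∈ I → p ∉ A → q ∉ A → p ≠ q →
      G.Adj u p → G.Adj u q →
      ∃ z ∈ A, G.Adj u z ∧ ∀ y, y ∈ I → G.Adj u y → y = p ∨ y = q ∨ y = z := by
    intro u p q huK hpI hqI hpA hqA hpq hup huq
    have huI : u ∉ I := hKnI u huK
    have huv : u ≠ v := by rintro rfl; exact hpA ⟨hup, hpI⟩
    have hex : ∃ z ∈ A, G.Adj u z := by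
      by_contra hcon
      push_neg at hcon
      refine star4_aux G hfree (c := v) (a := a₁) (b := a₂) (d := a₃) (e := u)
        h12 h13 (fun h => huI (h ▸ hAI a₁ ha₁)) h23 (fun h => huI (h ▸ hAI a₂ ha₂))
        (fun h => huI (h ▸ hAI a₃ ha₃))
        (fun h => hKnI v hv (h ▸ hAI a₁ ha₁)) (fun h => hKnI v hv (h ▸ hAI a₂ ha₂))
        (fun h => hKnI v hv (h ▸ hAI a₃ ha₃)) (Ne.symm huv)
        (hAadj a₁ ha₁) (hAadj a₂ ha₂) (hAadj a₃ ha₃) (hK hv huK (Ne.symm huv))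
        (hI (hAI a₁ ha₁) (hAI a₂ ha₂)) (hI (hAI a₁ ha₁) (hAI a₃ ha₃))
        (fun h => hcon a₁ ha₁ h.symm) (hI (hAI a₂ ha₂) (hAI a₃ ha₃))
        (fun h => hcon a₂ ha₂ h.symm) (fun h => hcon a₃ ha₃ h.symm)
    obtain ⟨z, hzA, huz⟩ := hex
    have hzI : z ∈ I := hAI z hzA
    refine ⟨z, hzA, huz, ?_⟩
    intro y hyI huy
    by_contra hy
    push_neg at hy
    obtain ⟨hyp, hyq, hyz⟩ := hy
    have hpz : p ≠ z := fun h => hpA (h ▸ hzA)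
    have hqz : q ≠ z := fun h => hqA (h ▸ hzA)
    exact star4_aux G hfree (c := u) (a := p) (b := q) (d := z) (e := y)
      hpq hpz (Ne.symm hyp) hqz (Ne.symm hyq) (Ne.symm hyz)
      (fun h => huI (h ▸ hpI)) (fun h => huI (h ▸ hqI)) (fun h => huI (h ▸ hzI))
      (fun h => huI (h ▸ hyI)) hup huq huz huy
      (hI hpI hqI) (hI hpI hzI) (hI hpI hyI) (hI hqI hzI) (hI hqI hyI) (hI hzI hyI)
  -- two distinct colored vertices whose neighborhoods are suitably separated
  -- have the same color
  have cross : ∀ u p q z u' z', u ∈ K → u' ∈ K → u ≠ u' →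
      p ∈ I → q ∈ I → p ∉ A → q ∉ A → p ≠ q →
      G.Adj u p → G.Adj u q → z ∈ A → G.Adj u z → z' ∈ A →
      ¬ G.Adj u' p → ¬ G.Adj u' q → (∀ y ∈ A, G.Adj u' y → y = z') →
      z = z' := by
    intro u p q z u' z' huK hu'K huu' hpI hqI hpA hqA hpq hup huq hzA huz hz'A hn1 hn2 hn3
    by_contra hzz
    have hzI : z ∈ I := hAI z hzA
    have huI : u ∉ I := hKnI u huK
    have hu'I : u' ∉ I := hKnI u' hu'K
    have hpz : p ≠ z := fun h => hpA (h ▸ hzA)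
    have hqz : q ≠ z := fun h => hqA (h ▸ hzA)
    exact star4_aux G hfree (c := u) (a := p) (b := q) (d := z) (e := u')
      hpq hpz (fun h => hu'I (h ▸ hpI)) hqz (fun h => hu'I (h ▸ hqI))
      (fun h => hu'I (h ▸ hzI))
      (fun h => huI (h ▸ hpI)) (fun h => huI (h ▸ hqI)) (fun h => huI (h ▸ hzI)) huu'
      hup huq huz (hK huK hu'K huu')
      (hI hpI hqI) (hI hpI hzI) (fun h => hn1 h.symm) (hI hqI hzI)
      (fun h => hn2 h.symm) (fun h => hzz (hn3 z hzA h.symm))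
  obtain ⟨hi2, hwKA, hxIA, hwinj, hxinj, hwx, hadjP⟩ := hP
  obtain ⟨hj2, hsKA, htIA, hsinj, htinj, hst, hadjQ⟩ := hQ
  -- membership in the path vertex sets
  have memPw : ∀ k < i, w k ∈ altPathVerts i w x := fun k hk => Or.inl ⟨k, hk, rfl⟩
  have memPx : ∀ k < i - 1, x k ∈ altPathVerts i w x := fun k hk => Or.inr ⟨k, hk, rfl⟩
  have memQs : ∀ k < j, s k ∈ altPathVerts j s t := fun k hk => Or.inl ⟨k, hk, rfl⟩
  have memQt : ∀ k < j - 1, t k ∈ altPathVerts j s t := fun k hk => Or.inr ⟨k, hk, rfl⟩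
  have hdisj' : ∀ u ∈ altPathVerts i w x, ∀ u' ∈ altPathVerts j s t, u ≠ u' := by
    intro u hu u' hu' h
    exact Set.disjoint_left.mp hdisj hu (h ▸ hu')
  -- the color of s 1
  have hs1lt : (1 : ℕ) < j := by omega
  have ht0lt : (0 : ℕ) < j - 1 := by omega
  have ht1lt : (1 : ℕ) < j - 1 := by omega
  have hadjQ0 := hadjQ 0 ht0lt
  have hadjQ1 := hadjQ 1 ht1lt
  obtain ⟨z₀, hz₀A, hs1z₀, hs1full⟩ := color (s 1) (t 0) (t 1) (hsKA 1 hs1lt).1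
    (htIA 0 ht0lt).1 (htIA 1 ht1lt).1 (htIA 0 ht0lt).2 (htIA 1 ht1lt).2
    (fun h => (by omega : (0:ℕ) ≠ 1) (htinj 0 ht0lt 1 ht1lt h))
    hadjQ0.2 hadjQ1.1
  have hs1A : ∀ y ∈ A, G.Adj (s 1) y → y = z₀ := by
    intro y hyA hadj
    rcases hs1full y (hAI y hyA) hadj with h | h | h
    · exact absurd (h ▸ hyA) (htIA 0 ht0lt).2
    · exact absurd (h ▸ hyA) (htIA 1 ht1lt).2
    · exact h
  -- the color of w 1
  have hw1lt : (1 : ℕ) < i := by omega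
  have hx0lt : (0 : ℕ) < i - 1 := by omega
  have hx1lt : (1 : ℕ) < i - 1 := by omega
  have hadjP0 := hadjP 0 hx0lt
  have hadjP1 := hadjP 1 hx1lt
  obtain ⟨z₁, hz₁A, hw1z₁, hw1full⟩ := color (w 1) (x 0) (x 1) (hwKA 1 hw1lt).1
    (hxIA 0 hx0lt).1 (hxIA 1 hx1lt).1 (hxIA 0 hx0lt).2 (hxIA 1 hx1lt).2
    (fun h => (by omega : (0:ℕ) ≠ 1) (hxinj 0 hx0lt 1 hx1lt h))
    hadjP0.2 hadjP1.1
  have hw1A : ∀ y ∈ A, G.Adj (w 1) y → y = z₁ := by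
    intro y hyA hadj
    rcases hw1full y (hAI y hyA) hadj with h | h | h
    · exact absurd (h ▸ hyA) (hxIA 0 hx0lt).2
    · exact absurd (h ▸ hyA) (hxIA 1 hx1lt).2
    · exact h
  -- internal P vertices have color z₀
  have colP : ∀ k, 1 ≤ k → k < i - 1 → G.Adj z₀ (w k) := by
    intro k hk1 hk2
    have hkm : k - 1 < i - 1 := by omega
    have hkk : k < i - 1 := hk2
    have hklt : k < i := by omega
    have hadj1 := hadjP (k - 1) hkm
    have hk1eq : k - 1 + 1 = k := by omega
    rw [hk1eq] at hadj1
    have hadj2 := hadjP k hkk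
    have hxne : x (k - 1) ≠ x k := fun h => (by omega : k - 1 ≠ k) (hxinj _ hkm _ hkk h)
    obtain ⟨z, hzA, hwz, _⟩ := color (w k) (x (k - 1)) (x k) (hwKA k hklt).1
      (hxIA _ hkm).1 (hxIA _ hkk).1 (hxIA _ hkm).2 (hxIA _ hkk).2 hxne hadj1.2 hadj2.1
    have hn1 : ¬ G.Adj (s 1) (x (k - 1)) := by
      intro h
      rcases hs1full (x (k - 1)) (hxIA _ hkm).1 h with h' | h' | h'
      · exact hdisj' _ (memPx _ hkm) _ (memQt 0 ht0lt) h'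
      · exact hdisj' _ (memPx _ hkm) _ (memQt 1 ht1lt) h'
      · exact (hxIA _ hkm).2 (h' ▸ hz₀A)
    have hn2 : ¬ G.Adj (s 1) (x k) := by
      intro h
      rcases hs1full (x k) (hxIA _ hkk).1 h with h' | h' | h'
      · exact hdisj' _ (memPx _ hkk) _ (memQt 0 ht0lt) h'
      · exact hdisj' _ (memPx _ hkk) _ (memQt 1 ht1lt) h'
      · exact (hxIA _ hkk).2 (h' ▸ hz₀A)
    have hne : w k ≠ s 1 := hdisj' _ (memPw k hklt) _ (memQs 1 hs1lt)
    have := cross (w k) (x (k - 1)) (x k) z (s 1) z₀ (hwKA k hklt).1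
      (hsKA 1 hs1lt).1 hne (hxIA _ hkm).1 (hxIA _ hkk).1 (hxIA _ hkm).2 (hxIA _ hkk).2
      hxne hadj1.2 hadj2.1 hzA hwz hz₀A hn1 hn2 hs1A
    exact (this ▸ hwz).symm
  -- z₁ = z₀
  have hz₁₀ : z₁ = z₀ := by
    have hne : w 1 ≠ s 1 := hdisj' _ (memPw 1 hw1lt) _ (memQs 1 hs1lt)
    have hn1 : ¬ G.Adj (s 1) (x 0) := by
      intro h
      rcases hs1full (x 0) (hxIA 0 hx0lt).1 h with h' | h' | h'
      · exact hdisj' _ (memPx 0 hx0lt) _ (memQt 0 ht0lt) h'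
      · exact hdisj' _ (memPx 0 hx0lt) _ (memQt 1 ht1lt) h'
      · exact (hxIA 0 hx0lt).2 (h' ▸ hz₀A)
    have hn2 : ¬ G.Adj (s 1) (x 1) := by
      intro h
      rcases hs1full (x 1) (hxIA 1 hx1lt).1 h with h' | h' | h'
      · exact hdisj' _ (memPx 1 hx1lt) _ (memQt 0 ht0lt) h'
      · exact hdisj' _ (memPx 1 hx1lt) _ (memQt 1 ht1lt) h'
      · exact (hxIA 1 hx1lt).2 (h' ▸ hz₀A)
    exact cross (w 1) (x 0) (x 1) z₁ (s 1) z₀ (hwKA 1 hw1lt).1 (hsKA 1 hs1lt).1 hne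
      (hxIA 0 hx0lt).1 (hxIA 1 hx1lt).1 (hxIA 0 hx0lt).2 (hxIA 1 hx1lt).2
      (fun h => (by omega : (0:ℕ) ≠ 1) (hxinj 0 hx0lt 1 hx1lt h))
      hadjP0.2 hadjP1.1 hz₁A hw1z₁ hz₀A hn1 hn2 hs1A
  -- internal Q vertices have color z₀ (cross with w 1)
  have colQ : ∀ k, 1 ≤ k → k < j - 1 → G.Adj z₀ (s k) := by
    intro k hk1 hk2
    have hkm : k - 1 < j - 1 := by omega
    have hkk : k < j - 1 := hk2
    have hklt : k < j := by omega
    have hadj1 := hadjQ (k - 1) hkm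
    have hk1eq : k - 1 + 1 = k := by omega
    rw [hk1eq] at hadj1
    have hadj2 := hadjQ k hkk
    have htne : t (k - 1) ≠ t k := fun h => (by omega : k - 1 ≠ k) (htinj _ hkm _ hkk h)
    obtain ⟨z, hzA, hsz, _⟩ := color (s k) (t (k - 1)) (t k) (hsKA k hklt).1
      (htIA _ hkm).1 (htIA _ hkk).1 (htIA _ hkm).2 (htIA _ hkk).2 htne hadj1.2 hadj2.1
    have hn1 : ¬ G.Adj (w 1) (t (k - 1)) := by
      intro h
      rcases hw1full (t (k - 1)) (htIA _ hkm).1 h with h' | h' | h'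
      · exact hdisj' _ (memPx 0 hx0lt) _ (memQt _ hkm) h'.symm
      · exact hdisj' _ (memPx 1 hx1lt) _ (memQt _ hkm) h'.symm
      · exact (htIA _ hkm).2 (h' ▸ hz₁A)
    have hn2 : ¬ G.Adj (w 1) (t k) := by
      intro h
      rcases hw1full (t k) (htIA _ hkk).1 h with h' | h' | h'
      · exact hdisj' _ (memPx 0 hx0lt) _ (memQt _ hkk) h'.symm
      · exact hdisj' _ (memPx 1 hx1lt) _ (memQt _ hkk) h'.symm
      · exact (htIA _ hkk).2 (h' ▸ hz₁A)
    have hne : s k ≠ w 1 := fun h => hdisj' _ (memPw 1 hw1lt) _ (memQs k hklt) h.symm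
    have := cross (s k) (t (k - 1)) (t k) z (w 1) z₁ (hsKA k hklt).1
      (hwKA 1 hw1lt).1 hne (htIA _ hkm).1 (htIA _ hkk).1 (htIA _ hkm).2 (htIA _ hkk).2
      htne hadj1.2 hadj2.1 hzA hsz hz₁A hn1 hn2 hw1A
    rw [this, hz₁₀] at hsz
    exact hsz.symm
  exact ⟨z₀, hz₀A, colP, colQ⟩
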